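/- Let X be an n-dimensional topological manifold and λ a partition of n₀ with k parts. Then w_λ(X) ⊆ Sym^{n₀}(X) is a topological manifold of dimension k · dim(X). -/

import Mathlib

/-- Tuples indexed by `ι` up to permutation of the indices. For `ι = Fin n` this is
the `n`-th symmetric product `Sym^n X = X^n / Σ_n`. -/
def symSetoid (ι : Type*) (X : Type*) [TopologicalSpace X] : Setoid (ι → X) where
  r f g := ∃ σ : Equiv.Perm ι, f = g ∘ σ
  iseqv := by
    constructor
    · exact fun f => ⟨1, rfl⟩
    · rintro f g ⟨σ, hf⟩
      refine ⟨σ⁻¹, funext fun x => ?_⟩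
      have := congrFun hf (σ⁻¹ x)
      simp only [Function.comp_apply, Equiv.Perm.inv_def, Equiv.apply_symm_apply] at this ⊢
      exact this.symm
    · rintro f g h ⟨σ, hf⟩ ⟨τ, hg⟩
      refine ⟨σ.trans τ, funext fun x => ?_⟩
      have h1 := congrFun hf x
      have h2 := congrFun hg (σ x)
      simp only [Function.comp_apply, Equiv.coe_trans] at h1 h2 ⊢
      rw [h1, h2]

/-- The symmetric product of `X` with indexing set `ι` (for `ι = Fin n`, this is
`Sym^n X`), with the quotient topology. -/
def SymProd (ι : Type*) (X : Type*) [TopologicalSpace X] : Type _ :=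
  Quotient (symSetoid ι X)

instance {ι X : Type*} [TopologicalSpace X] : TopologicalSpace (SymProd ι X) :=
  instTopologicalSpaceQuotient

/-- The multiplicity type of a tuple `f : ι → X`: the multiset of the cardinalities
of the fibres of `f` over the points in its image. -/
noncomputable def multType {ι X : Type*} [Fintype ι] (f : ι → X) : Multiset ℕ := by
  classical
  exact (Finset.univ.image f).val.map fun x => (Finset.univ.filter fun i => f i = x).card

/-- `w_λ(X) ⊆ Sym^n X` : the subspace of the symmetric product consisting of the
points whose multiset of multiplicities is exactly `λ`. -/
noncomputable def wSet (X : Type*) [TopologicalSpace X] {n : ℕ} (lam : Nat.Partition n) :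
    Set (SymProd (Fin n) X) :=
  {s | ∃ f : Fin n → X, Quotient.mk (symSetoid (Fin n) X) f = s ∧ multType f = lam.parts}

section Helpers

open Finset

variable {n k : ℕ} {X : Type*} [TopologicalSpace X]

/-- The multiset of values of a tuple. -/
def mcount {α : Type*} (f : Fin n → α) : Multiset α := Multiset.map f Finset.univ.val

lemma mcount_count {α : Type*} [DecidableEq α] (f : Fin n → α) (a : α) :
    Multiset.count a (mcount f) = (Finset.univ.filter fun i => f i = a).card := by
  rw [mcount, Multiset.count_map]
  rw [Finset.card, Finset.filter_val]
  congr 1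
  exact Multiset.filter_congr (fun x _ => eq_comm)

lemma filter_card_perm {p : Fin n → Prop} [DecidablePred p] (σ : Equiv.Perm (Fin n)) :
    (Finset.univ.filter fun j => p (σ j)).card = (Finset.univ.filter p).card := by
  refine Finset.card_bij (fun j _ => σ j) ?_ ?_ ?_
  · intro a ha
    simp only [Finset.mem_filter, Finset.mem_univ, true_and] at ha ⊢
    exact ha
  · intro a _ b _ h
    exact σ.injective h
  · intro b hb
    refine ⟨σ.symm b, ?_, by simp⟩
    simp only [Finset.mem_filter, Finset.mem_univ, true_and] at hb ⊢
    simpa using hb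

lemma mcount_comp_perm {α : Type*} (f : Fin n → α) (σ : Equiv.Perm (Fin n)) :
    mcount (f ∘ σ) = mcount f := by
  rw [mcount, mcount, ← Multiset.map_map, Multiset.map_univ_val_equiv]

lemma mk_eq_iff (f g : Fin n → X) :
    Quotient.mk (symSetoid (Fin n) X) f = Quotient.mk (symSetoid (Fin n) X) g ↔
      mcount f = mcount g := by
  classical
  constructor
  · intro h
    obtain ⟨σ, hσ⟩ := Quotient.exact h
    rw [hσ]
    exact mcount_comp_perm g σ
  · intro h
    refine Quotient.sound ?_
    have hfib : ∀ a : X, Fintype.card {i // f i = a} = Fintype.card {i // g i = a} := by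
      intro a
      have hc := congrArg (Multiset.count a) h
      rw [mcount_count, mcount_count] at hc
      simpa [Fintype.card_subtype] using hc
    have e : ∀ a : X, {i // f i = a} ≃ {i // g i = a} := fun a =>
      Fintype.equivOfCardEq (hfib a)
    exact ⟨Equiv.ofFiberEquiv e, funext fun i => (Equiv.ofFiberEquiv_map e i).symm⟩

lemma mcount_comp_of_count_eq (y : Fin k → X) (c c' : Fin n → Fin k)
    (h : ∀ i, (Finset.univ.filter fun j => c j = i).card =
      (Finset.univ.filter fun j => c' j = i).card) :
    mcount (y ∘ c) = mcount (y ∘ c') := by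
  have hcc : mcount c = mcount c' := by
    refine Multiset.ext.2 fun i => ?_
    rw [mcount_count, mcount_count, h]
  show Multiset.map (y ∘ c) _ = Multiset.map (y ∘ c') _
  rw [← Multiset.map_map, ← Multiset.map_map]
  show Multiset.map y (mcount c) = Multiset.map y (mcount c')
  rw [hcc]

end Helpers
section Helpers2

set_option linter.unusedSectionVars false
set_option maxHeartbeats 1000000

open Finset

variable {n k : ℕ} {X : Type*} [TopologicalSpace X]

lemma multType_def {f : Fin n → X} [DecidableEq X] [∀ x, DecidablePred fun i => f i = x] :
    multType f = (Finset.univ.image f).val.map fun x => (Finset.univ.filter fun i => f i = x).card := by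
  unfold multType
  refine Multiset.map_congr ?_ fun x _ => ?_
  · congr!
  · congr!

lemma card_multType [DecidableEq X] (f : Fin n → X) :
    Multiset.card (multType f) = (Finset.univ.image (α := Fin n) f).card := by
  classical
  rw [multType_def, Multiset.card_map]
  rfl

lemma multType_eq_of_comp_perm (g : Fin n → X) (σ : Equiv.Perm (Fin n)) :
    multType (g ∘ σ) = multType g := by
  classical
  rw [multType_def, multType_def]
  have himg : Finset.univ.image (g ∘ σ) = Finset.univ.image g := by
    rw [← Finset.image_image, Finset.image_univ_of_surjective σ.surjective]
  rw [himg]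
  refine Multiset.map_congr rfl fun x _ => ?_
  exact filter_card_perm (p := fun i => g i = x) σ

lemma multType_comp (y : Fin k → X) (c : Fin n → Fin k) (hy : Function.Injective y)
    (hc : Function.Surjective c) :
    multType (y ∘ c) =
      Multiset.map (fun i => (Finset.univ.filter fun j => c j = i).card) Finset.univ.val := by
  classical
  rw [multType_def]
  have himg : Finset.univ.image (y ∘ c) = Finset.univ.image y := by
    rw [← Finset.image_image, Finset.image_univ_of_surjective hc]
  have hval : (Finset.univ.image y).val = Multiset.map y Finset.univ.val := by
    rw [show Finset.univ.image y = Finset.univ.map ⟨y, hy⟩ from by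
      rw [Finset.map_eq_image]; rfl, Finset.map_val]
    rfl
  rw [himg, hval, Multiset.map_map]
  refine Multiset.map_congr rfl fun i _ => ?_
  simp only [Function.comp_apply]
  congr 1
  refine Finset.filter_congr fun j _ => ?_
  simp [Function.comp, hy.eq_iff]

/-- The saturated open set of tuples having exactly `μ i` coordinates in `V i`. -/
def Wset (μ : Fin k → ℕ) (V : Fin k → Set X) : Set (Fin n → X) :=
  {g | ∃ c' : Fin n → Fin k, (∀ j, g j ∈ V (c' j)) ∧
    ∀ i, (Finset.univ.filter fun j => c' j = i).card = μ i}

lemma isOpen_Wset (μ : Fin k → ℕ) (V : Fin k → Set X) (hV : ∀ i, IsOpen (V i)) :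
    IsOpen (Wset (n := n) μ V) := by
  have : Wset (n := n) μ V = ⋃ c' ∈ {c' : Fin n → Fin k |
      ∀ i, (Finset.univ.filter fun j => c' j = i).card = μ i},
      Set.pi Set.univ (fun j => V (c' j)) := by
    ext g
    simp only [Wset, Set.mem_setOf_eq, Set.mem_iUnion, Set.mem_pi, Set.mem_univ, true_implies]
    tauto
  rw [this]
  exact isOpen_biUnion fun c' _ => isOpen_set_pi Set.finite_univ fun j _ => hV (c' j)

lemma Wset_saturated (μ : Fin k → ℕ) (V : Fin k → Set X) (g : Fin n → X)
    (σ : Equiv.Perm (Fin n)) (h : g ∘ σ ∈ Wset μ V) : g ∈ Wset μ V := by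
  obtain ⟨c', hmem, hcount⟩ := h
  refine ⟨fun j => c' (σ.symm j), fun j => ?_, fun i => ?_⟩
  · have := hmem (σ.symm j)
    simpa using this
  · rw [filter_card_perm (p := fun j => c' j = i) σ.symm]
    exact hcount i

lemma isOpen_mkW (μ : Fin k → ℕ) (V : Fin k → Set X) (hV : ∀ i, IsOpen (V i)) :
    IsOpen (Quotient.mk (symSetoid (Fin n) X) '' Wset μ V) := by
  have hpre : Quotient.mk (symSetoid (Fin n) X) ⁻¹'
      (Quotient.mk (symSetoid (Fin n) X) '' Wset μ V) = Wset μ V := by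
    ext g
    constructor
    · rintro ⟨g', hg', hq⟩
      obtain ⟨σ, hσ⟩ := Quotient.exact hq
      rw [hσ] at hg'
      exact Wset_saturated μ V g σ hg'
    · intro hg
      exact ⟨g, hg, rfl⟩
  have : IsOpen (Quotient.mk (symSetoid (Fin n) X) ⁻¹'
      (Quotient.mk (symSetoid (Fin n) X) '' Wset μ V)) := by
    rw [hpre]; exact isOpen_Wset μ V hV
  exact this

end Helpers2
section Helpers3

set_option linter.unusedSectionVars false
set_option maxHeartbeats 1000000

open Finset

variable {n k : ℕ} {X : Type*} [TopologicalSpace X]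

lemma multType_comp_eq_parts (lam : Nat.Partition n) (μ : Fin k → ℕ)
    (hμ : Multiset.map μ Finset.univ.val = lam.parts)
    (c : Fin n → Fin k) (hc : ∀ i, (Finset.univ.filter fun j => c j = i).card = μ i)
    (hcs : Function.Surjective c)
    (y : Fin k → X) (hy : Function.Injective y) :
    multType (y ∘ c) = lam.parts := by
  rw [multType_comp y c hy hcs, ← hμ]
  exact Multiset.map_congr rfl fun i _ => hc i

lemma surjective_of_counts (μ : Fin k → ℕ) (hμpos : ∀ i, 0 < μ i)
    (c : Fin n → Fin k) (hc : ∀ i, (Finset.univ.filter fun j => c j = i).card = μ i) :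
    Function.Surjective c := by
  intro i
  have : 0 < (Finset.univ.filter fun j => c j = i).card := by rw [hc i]; exact hμpos i
  obtain ⟨j, hj⟩ := Finset.card_pos.1 this
  exact ⟨j, (Finset.mem_filter.1 hj).2⟩

lemma injective_of_pi {V : Fin k → Set X} (hVd : ∀ i i', i ≠ i' → Disjoint (V i) (V i'))
    {y : Fin k → X} (hy : ∀ i, y i ∈ V i) : Function.Injective y := by
  intro i i' h
  by_contra hne
  exact Set.disjoint_left.1 (hVd i i' hne) (hy i) (h ▸ hy i')

lemma image_eq (lam : Nat.Partition n) (hk : Multiset.card lam.parts = k)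
    (μ : Fin k → ℕ) (hμ : Multiset.map μ Finset.univ.val = lam.parts) (hμpos : ∀ i, 0 < μ i)
    (c : Fin n → Fin k) (hc : ∀ i, (Finset.univ.filter fun j => c j = i).card = μ i)
    (V : Fin k → Set X) (hVd : ∀ i i', i ≠ i' → Disjoint (V i) (V i')) :
    (fun y : Fin k → X => Quotient.mk (symSetoid (Fin n) X) (y ∘ c)) '' (Set.pi Set.univ V)
      = (Quotient.mk (symSetoid (Fin n) X) '' Wset μ V) ∩ wSet X lam := by
  classical
  have hcs : Function.Surjective c := surjective_of_counts μ hμpos c hc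
  ext t
  constructor
  · rintro ⟨y, hy, rfl⟩
    have hy' : ∀ i, y i ∈ V i := fun i => hy i (Set.mem_univ i)
    have hyinj : Function.Injective y := injective_of_pi hVd hy'
    refine ⟨⟨y ∘ c, ⟨c, fun j => hy' (c j), hc⟩, rfl⟩, ⟨y ∘ c, rfl, ?_⟩⟩
    exact multType_comp_eq_parts lam μ hμ c hc hcs y hyinj
  · rintro ⟨⟨g, ⟨c', hgV, hc'⟩, rfl⟩, htw⟩
    -- `multType g = lam.parts`
    obtain ⟨f', hf', hmult'⟩ := htw
    have hmultg : multType g = lam.parts := by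
      obtain ⟨σ, hσ⟩ := Quotient.exact hf'
      rw [← hmult', hσ, multType_eq_of_comp_perm]
    -- the image of `g` has exactly `k` elements
    have himgk : (Finset.univ.image g).card = k := by
      rw [← card_multType g, hmultg, hk]
    -- clusters
    set ψ : Fin k → Finset X := fun i => (Finset.univ.image g).filter (· ∈ V i) with hψ
    have hψdisj : ∀ i i', i ≠ i' → Disjoint (ψ i) (ψ i') := by
      intro i i' hne
      refine Finset.disjoint_left.2 fun a ha ha' => ?_
      exact Set.disjoint_left.1 (hVd i i' hne) (Finset.mem_filter.1 ha).2
        (Finset.mem_filter.1 ha').2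
    have hψcover : Finset.univ.biUnion ψ = Finset.univ.image g := by
      refine Finset.Subset.antisymm (fun a ha => ?_) (fun a ha => ?_)
      · obtain ⟨i, _, hai⟩ := Finset.mem_biUnion.1 ha
        exact (Finset.mem_filter.1 hai).1
      · obtain ⟨j, _, rfl⟩ := Finset.mem_image.1 ha
        exact Finset.mem_biUnion.2 ⟨c' j, Finset.mem_univ _,
          Finset.mem_filter.2 ⟨ha, hgV j⟩⟩
    have hψpos : ∀ i, 0 < (ψ i).card := by
      intro i
      have : 0 < μ i := hμpos i
      rw [← hc' i] at this
      obtain ⟨j, hj⟩ := Finset.card_pos.1 this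
      have hcj : c' j = i := (Finset.mem_filter.1 hj).2
      refine Finset.card_pos.2 ⟨g j, Finset.mem_filter.2 ⟨?_, hcj ▸ hgV j⟩⟩
      exact Finset.mem_image_of_mem g (Finset.mem_univ j)
    have hsum : ∑ i : Fin k, (ψ i).card = k := by
      rw [← Finset.card_biUnion (fun i _ i' _ h => hψdisj i i' h), hψcover, himgk]
    have hone : ∀ i, (ψ i).card = 1 := by
      by_contra hcon
      push_neg at hcon
      obtain ⟨i₀, hi₀⟩ := hcon
      have h2 : 1 < (ψ i₀).card := lt_of_le_of_ne (hψpos i₀) (Ne.symm hi₀)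
      have : ∑ _i : Fin k, 1 < ∑ i : Fin k, (ψ i).card :=
        Finset.sum_lt_sum (fun i _ => hψpos i) ⟨i₀, Finset.mem_univ _, h2⟩
      rw [hsum] at this
      simp at this
    choose y hy using fun i => Finset.card_eq_one.1 (hone i)
    have hyV : ∀ i, y i ∈ V i := by
      intro i
      have : y i ∈ ψ i := by rw [hy i]; exact Finset.mem_singleton_self _
      exact (Finset.mem_filter.1 this).2
    have hgy : ∀ j, g j = y (c' j) := by
      intro j
      have : g j ∈ ψ (c' j) := Finset.mem_filter.2
        ⟨Finset.mem_image_of_mem g (Finset.mem_univ j), hgV j⟩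
      rw [hy (c' j)] at this
      exact Finset.mem_singleton.1 this
    refine ⟨y, fun i _ => hyV i, ?_⟩
    have h1 : Quotient.mk (symSetoid (Fin n) X) (y ∘ c)
        = Quotient.mk (symSetoid (Fin n) X) (y ∘ c') := by
      rw [mk_eq_iff]
      exact mcount_comp_of_count_eq y c c' fun i => by rw [hc i, hc' i]
    show Quotient.mk (symSetoid (Fin n) X) (y ∘ c) = Quotient.mk (symSetoid (Fin n) X) g
    rw [h1]
    congr 1
    exact funext fun j => (hgy j).symm

end Helpers3
section Helpers4

set_option linter.unusedSectionVars false
set_option maxHeartbeats 1000000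

open Finset

variable {n k : ℕ} {X : Type*} [TopologicalSpace X]

lemma exists_partialHomeo (lam : Nat.Partition n) (hk : Multiset.card lam.parts = k)
    (μ : Fin k → ℕ) (hμ : Multiset.map μ Finset.univ.val = lam.parts) (hμpos : ∀ i, 0 < μ i)
    (c : Fin n → Fin k) (hc : ∀ i, (Finset.univ.filter fun j => c j = i).card = μ i)
    (U : Fin k → Set X) (hUo : ∀ i, IsOpen (U i))
    (hUd : ∀ i i', i ≠ i' → Disjoint (U i) (U i'))
    (s₀ : ↥(wSet X lam)) (hne : Nonempty (Fin k → X)) :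
    ∃ PH : OpenPartialHomeomorph (Fin k → X) ↥(wSet X lam),
      PH.source = Set.pi Set.univ U ∧
      ∀ y ∈ Set.pi Set.univ U,
        ((PH y : ↥(wSet X lam)) : SymProd (Fin n) X) = Quotient.mk (symSetoid (Fin n) X) (y ∘ c)
          ∧ PH.symm (PH y) = y := by
  classical
  haveI : Nonempty ↥(wSet X lam) := ⟨s₀⟩
  haveI := hne
  have hcs : Function.Surjective c := surjective_of_counts μ hμpos c hc
  set Φ : (Fin k → X) → SymProd (Fin n) X :=
    fun y => Quotient.mk (symSetoid (Fin n) X) (y ∘ c) with hΦ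
  have hΦcont : Continuous Φ := by
    refine Continuous.comp ?_ (continuous_pi fun j => continuous_apply (c j))
    exact continuous_coinduced_rng
  set S : Set (Fin k → X) := Set.pi Set.univ U with hS
  have hwS : ∀ y ∈ S, Φ y ∈ wSet X lam := by
    intro y hy
    exact ⟨y ∘ c, rfl, multType_comp_eq_parts lam μ hμ c hc hcs y
      (injective_of_pi hUd fun i => hy i (Set.mem_univ i))⟩
  set F : (Fin k → X) → ↥(wSet X lam) := fun y =>
    if h : Φ y ∈ wSet X lam then ⟨Φ y, h⟩ else Classical.arbitrary _ with hF
  have hFS : ∀ y ∈ S, (F y : SymProd (Fin n) X) = Φ y := by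
    intro y hy
    rw [hF]
    simp only [dif_pos (hwS y hy)]
  have himg : ∀ V : Fin k → Set X, (∀ i, V i ⊆ U i) →
      F '' (Set.pi Set.univ V)
        = Subtype.val ⁻¹' (Quotient.mk (symSetoid (Fin n) X) '' Wset μ V) := by
    intro V hVU
    have hVd : ∀ i i', i ≠ i' → Disjoint (V i) (V i') := fun i i' h =>
      (hUd i i' h).mono (hVU i) (hVU i')
    have h2 := image_eq lam hk μ hμ hμpos c hc V hVd
    refine Set.image_injective.2 Subtype.val_injective ?_
    have hsub : Set.pi Set.univ V ⊆ S := fun y hy i hi => hVU i (hy i hi)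
    have hl : Subtype.val '' (F '' (Set.pi Set.univ V)) = Φ '' Set.pi Set.univ V := by
      rw [← Set.image_comp]
      exact Set.image_congr fun y hy => hFS y (hsub hy)
    rw [hl]
    exact h2.trans ((Subtype.image_preimage_coe _ _).trans (Set.inter_comm _ _)).symm
  have hinjS : Set.InjOn F S := by
    intro y hy y' hy' hFe
    have hΦe : Φ y = Φ y' := by rw [← hFS y hy, ← hFS y' hy', hFe]
    have hmc : mcount (y ∘ c) = mcount (y' ∘ c) := (mk_eq_iff _ _).1 hΦe
    funext i
    have hmem : y i ∈ mcount (y ∘ c) := by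
      obtain ⟨j, hj⟩ := hcs i
      exact Multiset.mem_map.2 ⟨j, by simp, by simp [hj]⟩
    rw [hmc] at hmem
    obtain ⟨j', _, hj'⟩ := Multiset.mem_map.1 hmem
    simp only [Function.comp_apply] at hj'
    have h1 : y' (c j') ∈ U (c j') := hy' (c j') (Set.mem_univ _)
    have h2 : y i ∈ U i := hy i (Set.mem_univ i)
    by_cases hii : c j' = i
    · rw [← hj', hii]
    · have h1' : y i ∈ U (c j') := hj' ▸ h1
      exact absurd h2 (Set.disjoint_left.1 (hUd (c j') i hii) h1')
  set T : Set ↥(wSet X lam) :=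
    Subtype.val ⁻¹' (Quotient.mk (symSetoid (Fin n) X) '' Wset μ U) with hT
  have hT_img : F '' S = T := himg U fun i => subset_rfl
  set G : ↥(wSet X lam) → (Fin k → X) := Function.invFunOn F S with hG
  have hmemT : ∀ t ∈ T, ∃ y ∈ S, F y = t := by
    intro t ht
    rw [← hT_img] at ht
    obtain ⟨y, hy, rfl⟩ := ht
    exact ⟨y, hy, rfl⟩
  refine ⟨{ toFun := F, invFun := G, source := S, target := T,
            map_source' := ?_, map_target' := ?_, left_inv' := ?_, right_inv' := ?_,
            open_source := isOpen_set_pi Set.finite_univ fun i _ => hUo i,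
            open_target := (isOpen_mkW μ U hUo).preimage continuous_subtype_val,
            continuousOn_toFun := ?_, continuousOn_invFun := ?_ }, rfl,
          fun y hy => ⟨hFS y hy, hinjS.leftInvOn_invFunOn hy⟩⟩
  · intro y hy
    rw [← hT_img]
    exact Set.mem_image_of_mem F hy
  · intro t ht
    exact Function.invFunOn_mem (hmemT t ht)
  · intro y hy
    exact hinjS.leftInvOn_invFunOn hy
  · intro t ht
    exact Function.invFunOn_eq (hmemT t ht)
  · exact (Topology.IsInducing.subtypeVal.continuousOn_iff).2
      ((hΦcont.continuousOn).congr fun y hy => hFS y hy)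
  · intro t ht
    obtain ⟨y, hyS, rfl⟩ := hmemT t ht
    have hGF : G (F y) = y := hinjS.leftInvOn_invFunOn hyS
    have key : Filter.Tendsto G (nhdsWithin (F y) T) (nhds y) := by
      rw [Filter.tendsto_def]
      intro N hN
      have hyN : y ∈ interior N := mem_interior_iff_mem_nhds.2 hN
      obtain ⟨V, hV, hVsub⟩ := (isOpen_pi_iff'.1 isOpen_interior) y hyN
      set V' : Fin k → Set X := fun i => V i ∩ U i with hV'
      have hV'o : ∀ i, IsOpen (V' i) := fun i => (hV i).1.inter (hUo i)
      have hV'U : ∀ i, V' i ⊆ U i := fun i => Set.inter_subset_right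
      have hyV' : y ∈ Set.pi Set.univ V' := fun i _ => ⟨(hV i).2, hyS i (Set.mem_univ i)⟩
      refine mem_nhdsWithin.2
        ⟨Subtype.val ⁻¹' (Quotient.mk (symSetoid (Fin n) X) '' Wset μ V'),
          (isOpen_mkW μ V' hV'o).preimage continuous_subtype_val, ?_, ?_⟩
      · have hmF := Set.mem_image_of_mem F hyV'
        rw [himg V' hV'U] at hmF
        exact hmF
      · rintro t' ⟨ht', -⟩
        have ht'' : t' ∈ F '' (Set.pi Set.univ V') := by
          rw [himg V' hV'U]
          exact ht'
        obtain ⟨y', hy', rfl⟩ := ht''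
        have hy'S : y' ∈ S := fun i hi => hV'U i (hy' i hi)
        have hGy' : G (F y') = y' := hinjS.leftInvOn_invFunOn hy'S
        rw [Set.mem_preimage, hGy']
        exact interior_subset (hVsub fun i hi => (hy' i hi).1)
    show Filter.Tendsto G (nhdsWithin (F y) T) (nhds (G (F y)))
    rw [hGF]
    exact key

end Helpers4
section Helpers5

set_option linter.unusedSectionVars false
set_option maxHeartbeats 1000000

open Finset

lemma exists_chart {X : Type*} [TopologicalSpace X] [T2Space X] (d : ℕ)
    [ChartedSpace (EuclideanSpace ℝ (Fin d)) X] {n k : ℕ} (lam : Nat.Partition n)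
    (hk : Multiset.card lam.parts = k) (s₀ : ↥(wSet X lam)) :
    ∃ ch : OpenPartialHomeomorph ↥(wSet X lam) (EuclideanSpace ℝ (Fin (k * d))),
      s₀ ∈ ch.source := by
  classical
  obtain ⟨f, hf, hmult⟩ := s₀.2
  -- nonemptiness of the model
  have hneF : Nonempty (Fin k → X) := by
    rcases Nat.eq_zero_or_pos k with hk0 | hk0
    · subst hk0
      exact ⟨fun i => i.elim0⟩
    · have hne0 : lam.parts ≠ 0 := by
        intro h0
        rw [h0] at hk
        simp at hk
        omega
      obtain ⟨a, ha⟩ := Multiset.exists_mem_of_ne_zero hne0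
      have hn : 0 < n := by
        have h1 : 0 < a := lam.parts_pos ha
        have h2 : a ≤ lam.parts.sum := Multiset.single_le_sum (fun y _ => Nat.zero_le y) a ha
        rw [lam.parts_sum] at h2
        omega
      exact ⟨fun _ => f ⟨0, hn⟩⟩
  -- the image of `f` and the points / multiplicities / colouring
  set T : Finset X := Finset.univ.image f with hT
  have hcard : T.card = k := by rw [hT, ← card_multType f, hmult, hk]
  set e : Fin k ≃ ↥T := (Fintype.equivFinOfCardEq (by rw [Fintype.card_coe, hcard])).symm with he
  set x : Fin k → X := fun i => (e i : X) with hx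
  set μ : Fin k → ℕ := fun i => (Finset.univ.filter fun j => f j = x i).card with hμdef
  set c : Fin n → Fin k := fun j =>
    e.symm ⟨f j, Finset.mem_image_of_mem f (Finset.mem_univ j)⟩ with hcdef
  have hfc : f = x ∘ c := funext fun j => by
    simp only [hx, hcdef, Function.comp_apply, Equiv.apply_symm_apply]
  have hc : ∀ i, (Finset.univ.filter fun j => c j = i).card = μ i := by
    intro i
    rw [hμdef]
    congr 1
    refine Finset.filter_congr fun j _ => ?_
    simp only [hcdef, Equiv.symm_apply_eq, Subtype.ext_iff, hx]
  have hμpos : ∀ i, 0 < μ i := by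
    intro i
    have hxm : x i ∈ T := (e i).2
    obtain ⟨j, _, hj⟩ := Finset.mem_image.1 (hT ▸ hxm)
    exact Finset.card_pos.2 ⟨j, Finset.mem_filter.2 ⟨Finset.mem_univ j, hj⟩⟩
  have hTval : Multiset.map x Finset.univ.val = T.val := by
    have h1 : Multiset.map (⇑e) Finset.univ.val = Finset.univ.val :=
      Multiset.map_univ_val_equiv e
    have h2 : Multiset.map Subtype.val (Multiset.map (⇑e) Finset.univ.val)
        = Multiset.map x Finset.univ.val := by
      rw [Multiset.map_map]; rfl
    rw [← h2, h1, Finset.univ_eq_attach, Finset.attach_val]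
    exact Multiset.attach_map_val T.val
  have hμ : Multiset.map μ Finset.univ.val = lam.parts := by
    rw [← hmult, multType_def, ← hT, ← hTval, Multiset.map_map]
    rfl
  -- pairwise disjoint open neighbourhoods of the base points
  have hxinj : Function.Injective x := fun i i' h => e.injective (Subtype.ext h)
  have hsep : ∀ i i' : Fin k, i ≠ i' → ∃ A B : Set X,
      IsOpen A ∧ IsOpen B ∧ x i ∈ A ∧ x i' ∈ B ∧ Disjoint A B :=
    fun i i' h => t2_separation fun he' => h (hxinj he')
  choose A B hA hB hxA hxB hAB using hsep
  set U : Fin k → Set X := fun i =>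
    (⋂ i', ⋂ h : i ≠ i', A i i' h) ∩ ⋂ i', ⋂ h : i' ≠ i, B i' i h with hU
  have hUo : ∀ i, IsOpen (U i) := fun i =>
    IsOpen.inter
      (isOpen_iInter_of_finite fun i' => isOpen_iInter_of_finite fun h => hA i i' h)
      (isOpen_iInter_of_finite fun i' => isOpen_iInter_of_finite fun h => hB i' i h)
  have hxU : ∀ i, x i ∈ U i := fun i =>
    ⟨Set.mem_iInter.2 fun i' => Set.mem_iInter.2 fun h => hxA i i' h,
     Set.mem_iInter.2 fun i' => Set.mem_iInter.2 fun h => hxB i' i h⟩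
  have hUd : ∀ i i', i ≠ i' → Disjoint (U i) (U i') := by
    intro i i' h
    refine (hAB i i' h).mono ?_ ?_
    · exact Set.inter_subset_left.trans
        (Set.iInter_subset_of_subset i' (Set.iInter_subset _ h))
    · exact Set.inter_subset_right.trans
        (Set.iInter_subset_of_subset i (Set.iInter_subset _ h))
  -- the local homeomorphism with the product
  obtain ⟨PH, hPHsrc, hPH2⟩ :=
    exists_partialHomeo lam hk μ hμ hμpos c hc U hUo hUd s₀ hneF
  have hxU' : x ∈ Set.pi Set.univ U := fun i _ => hxU i
  have hPHx := hPH2 x hxU'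
  have hsx : PH x = s₀ := Subtype.ext (by rw [hPHx.1, ← hfc, hf])
  -- charts on the factors and the linear identification
  set Q1 : OpenPartialHomeomorph (Fin k → X) (Fin k → EuclideanSpace ℝ (Fin d)) :=
    OpenPartialHomeomorph.pi fun i => chartAt (EuclideanSpace ℝ (Fin d)) (x i) with hQ1
  have hfr : Module.finrank ℝ (Fin k → EuclideanSpace ℝ (Fin d))
      = Module.finrank ℝ (EuclideanSpace ℝ (Fin (k * d))) := by
    rw [Module.finrank_pi_fintype]
    simp [finrank_euclideanSpace, mul_comm]
  set homeoE : (Fin k → EuclideanSpace ℝ (Fin d)) ≃ₜ EuclideanSpace ℝ (Fin (k * d)) :=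
    (ContinuousLinearEquiv.ofFinrankEq hfr).toHomeomorph with hhE
  refine ⟨PH.symm.trans (Q1.trans homeoE.toOpenPartialHomeomorph), ?_⟩
  rw [OpenPartialHomeomorph.trans_source]
  constructor
  · rw [OpenPartialHomeomorph.symm_source, ← hsx]
    exact PH.map_source (by rw [hPHsrc]; exact hxU')
  · rw [Set.mem_preimage]
    have hsymm : PH.symm s₀ = x := by rw [← hsx]; exact hPHx.2
    rw [hsymm, OpenPartialHomeomorph.trans_source]
    constructor
    · show x ∈ Q1.source
      rw [hQ1]
      show x ∈ Set.pi Set.univ fun i => (chartAt (EuclideanSpace ℝ (Fin d)) (x i)).source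
      exact fun i _ => mem_chart_source _ (x i)
    · simp
  
end Helpers5
/-- If `X` is an `d`-dimensional topological manifold and `λ` is a partition of `n₀`
with `k` parts, then `w_λ(X) ⊆ Sym^{n₀} X` is a topological manifold of dimension
`k * d`. -/
theorem stmt12 (X : Type*) [TopologicalSpace X] [T2Space X] (d : ℕ)
    [ChartedSpace (EuclideanSpace ℝ (Fin d)) X] {n₀ : ℕ} (lam : Nat.Partition n₀)
    (k : ℕ) (hk : Multiset.card lam.parts = k) :
    Nonempty (ChartedSpace (EuclideanSpace ℝ (Fin (k * d))) ↥(wSet X lam)) := by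
  have h := fun s : ↥(wSet X lam) => exists_chart d lam hk s
  exact ⟨{ atlas := Set.range fun s : ↥(wSet X lam) => (h s).choose,
           chartAt := fun s => (h s).choose,
           mem_chart_source := fun s => (h s).choose_spec,
           chart_mem_atlas := fun s => Set.mem_range_self s }⟩
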